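/- Fix d ≥ 2, N ≥ 1, T > 0, ε ≥ 0. Let σ ∈ {−1,1}^{Λ_N} with σ_o = −1, and let 𝒜_σ ⊂ Λ_N be the simply connected component enclosed by the outermost boundary of the sign component of the origin. Then the joint density ν^+ of the field and spin configuration under ℚ^+ satisfies the exact identity ν^+(h, σ) / ν^+(h^{𝒜_σ}, σ^{𝒜_σ}) = e^{−(2/T)|∂𝒜_σ|} · Z^+(h^{𝒜_σ}) / Z^+(h). -/

import Mathlib

open MeasureTheory ProbabilityTheory Real

namespace RFIM

/-- the lattice `ℤ^d`. -/
abbrev V (d : ℕ) := Fin d → ℤ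

/-- `u ∼ v` iff their `ℓ¹`-distance is `1`. -/
def adj {d : ℕ} (u v : V d) : Prop := (∑ i, |u i - v i|) = 1

instance {d : ℕ} (u v : V d) : Decidable (adj u v) := by
  unfold adj; infer_instance

/-- the nearest-neighbor graph on `ℤ^d`. -/
def latticeGraph (d : ℕ) : SimpleGraph (V d) where
  Adj u v := adj u v
  symm := by
    constructor
    intro u v h
    unfold adj at h ⊢
    rw [← h]
    exact Finset.sum_congr rfl fun i _ => abs_sub_comm _ _
  loopless := by
    constructor
    intro u h
    unfold adj at h
    simp at h

/-- the box `Λ_N = [-N,N]^d ∩ ℤ^d`. -/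
noncomputable def box (d N : ℕ) : Finset (V d) :=
  Finset.Icc (fun _ => -(N : ℤ)) (fun _ => (N : ℤ))

/-- the number of neighbors of `u` lying outside `Λ`. -/
noncomputable def nbrOut {d : ℕ} (Λ : Finset (V d)) (u : V d) : ℕ :=
  ((Finset.Icc (u - 1) (u + 1)).filter fun v => adj u v ∧ v ∉ Λ).card

/-- the size `|∂A|` of the edge boundary `∂A = {(u,v) : u ∼ v, u ∈ A, v ∉ A}`. -/
noncomputable def bdry {d : ℕ} (A : Finset (V d)) : ℕ :=
  ∑ u ∈ A, ((Finset.Icc (u - 1) (u + 1)).filter fun v => adj u v ∧ v ∉ A).card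

/-- the spin value `±1` attached to a Boolean. -/
noncomputable def spin (b : Bool) : ℝ := if b then 1 else -1

/-- a configuration on `Λ`, extended by `+1` (i.e. `true`) outside `Λ`. -/
def extCfg {d : ℕ} (Λ : Finset (V d)) (σ : Λ → Bool) : V d → Bool :=
  fun v => if h : v ∈ Λ then σ ⟨v, h⟩ else true

/-- the RFIM Hamiltonian `H^{η,Λ,εh}(σ)` on `Λ`, with boundary condition `η = ±1` and
external field `ε h`.  (The interior sum is over ordered pairs, whence the factor `1/2`.) -/
noncomputable def ham {d : ℕ} (Λ : Finset (V d)) (η ε : ℝ) (h : V d → ℝ) (σ : Λ → Bool) : ℝ :=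
  -((1/2) * ∑ u ∈ Λ, ∑ v ∈ Λ.filter (fun v => adj u v), spin (extCfg Λ σ u) * spin (extCfg Λ σ v)
    + η * ∑ u ∈ Λ, (nbrOut Λ u : ℝ) * spin (extCfg Λ σ u)
    + ∑ u ∈ Λ, ε * h u * spin (extCfg Λ σ u))

/-- the partition function `Z^η_{T,Λ}(εh)`. -/
noncomputable def Zf {d : ℕ} (Λ : Finset (V d)) (η T ε : ℝ) (h : V d → ℝ) : ℝ :=
  ∑ σ : Λ → Bool, exp (-(ham Λ η ε h σ) / T)

open Classical in
/-- the Gibbs probability `μ^η_{T,Λ,εh}(p)` of an event `p`. -/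
noncomputable def gibbsProb {d : ℕ} (Λ : Finset (V d)) (η T ε : ℝ) (h : V d → ℝ)
    (p : (Λ → Bool) → Prop) : ℝ :=
  (∑ σ : Λ → Bool, if p σ then exp (-(ham Λ η ε h σ) / T) else 0) / Zf Λ η T ε h

/-- the Gibbs expectation `⟨f⟩_{μ^η_{T,Λ,εh}}`. -/
noncomputable def gibbsExp {d : ℕ} (Λ : Finset (V d)) (η T ε : ℝ) (h : V d → ℝ)
    (f : (Λ → Bool) → ℝ) : ℝ :=
  (∑ σ : Λ → Bool, f σ * exp (-(ham Λ η ε h σ) / T)) / Zf Λ η T ε h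

/-- the field `h^A`, with the sign of `h` flipped exactly on `A`. -/
def flipField {d : ℕ} (A : Finset (V d)) (h : V d → ℝ) : V d → ℝ :=
  fun v => if v ∈ A then -h v else h v

/-- the configuration `σ^A`, with spins flipped exactly on `A`. -/
def flipCfg {d : ℕ} (A : Finset (V d)) {Λ : Finset (V d)} (σ : Λ → Bool) : Λ → Bool :=
  fun v => if (v : V d) ∈ A then !(σ v) else σ v

/-- the free energy difference `Δ_A(h) = -T log Z⁺(h) + T log Z⁺(h^A)`. -/
noncomputable def Δ {d : ℕ} (Λ : Finset (V d)) (T ε : ℝ) (A : Finset (V d)) (h : V d → ℝ) : ℝ :=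
  -T * log (Zf Λ 1 T ε h) + T * log (Zf Λ 1 T ε (flipField A h))

/-- the law of an i.i.d. standard Gaussian field indexed by `S`. -/
noncomputable def gaussField {d : ℕ} (S : Finset (V d)) : Measure (S → ℝ) :=
  Measure.pi fun _ => gaussianReal 0 1

/-- the field on `ℤ^d` equal to `ω` on `S` and to `g` off `S`. -/
def fieldFrom {d : ℕ} (S : Finset (V d)) (g : V d → ℝ) (ω : S → ℝ) : V d → ℝ :=
  fun v => if h : v ∈ S then ω ⟨v, h⟩ else g v

/-- `A` is simply connected: both `A` and its complement induce connected subgraphs. -/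
def SimplyConnected {d : ℕ} (A : Finset (V d)) : Prop :=
  ((latticeGraph d).induce (A : Set (V d))).Connected ∧
  ((latticeGraph d).induce ((A : Set (V d))ᶜ)).Connected

/-- the collection `𝔄` of simply connected subsets of `Λ_N` containing the origin. -/
def goodSets (d N : ℕ) : Set (Finset (V d)) :=
  {A | A ⊆ box d N ∧ (0 : V d) ∈ A ∧ SimplyConnected A}

/-- the joint density `ν⁺(h,σ)` of field and spins under `ℚ⁺`. -/
noncomputable def nuPlus {d : ℕ} (Λ : Finset (V d)) (T ε : ℝ) (h : V d → ℝ)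
    (σ : Λ → Bool) : ℝ :=
  (∏ u ∈ Λ, (1 / Real.sqrt (2 * π)) * exp (-(h u)^2 / 2)) *
    exp (-(ham Λ 1 ε h σ) / T) / Zf Λ 1 T ε h

lemma adj_symm {d : ℕ} {u v : V d} (h : adj u v) : adj v u := by
  unfold adj at h ⊢
  rw [← h]
  exact Finset.sum_congr rfl fun i _ => abs_sub_comm _ _

lemma adj_mem_Icc {d : ℕ} {u v : V d} (h : adj u v) :
    v ∈ Finset.Icc (u - 1) (u + 1) := by
  unfold adj at h
  rw [Finset.mem_Icc]
  constructor <;> intro i <;>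
  · have hle : |u i - v i| ≤ 1 := by
      calc |u i - v i| ≤ ∑ j, |u j - v j| :=
            Finset.single_le_sum (f := fun j => |u j - v j|)
              (fun j _ => abs_nonneg _) (Finset.mem_univ i)
        _ = 1 := h
    have := abs_le.mp hle
    simp only [Pi.sub_apply, Pi.add_apply, Pi.one_apply]
    omega

lemma spin_not (b : Bool) : spin (!b) = -spin b := by
  cases b <;> simp [spin]

lemma extCfg_flip {d : ℕ} {Λ A : Finset (V d)} (hAΛ : A ⊆ Λ) (σ : Λ → Bool) (v : V d) :
    extCfg Λ (flipCfg A σ) v = if v ∈ A then !(extCfg Λ σ v) else extCfg Λ σ v := by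
  unfold extCfg flipCfg
  by_cases hv : v ∈ Λ
  · simp [hv]
  · have : v ∉ A := fun hvA => hv (hAΛ hvA)
    simp [hv, this]

lemma bdry_split {d : ℕ} (Λ A : Finset (V d)) (hAΛ : A ⊆ Λ) (u : V d) (hu : u ∈ A) :
    ((Finset.Icc (u - 1) (u + 1)).filter fun v => adj u v ∧ v ∉ A).card
      = (Λ.filter fun v => adj u v ∧ v ∉ A).card + nbrOut Λ u := by
  classical
  have key := Finset.card_filter_add_card_filter_not
    (s := (Finset.Icc (u - 1) (u + 1)).filter fun v => adj u v ∧ v ∉ A)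
    (p := fun v => v ∈ Λ)
  have e1 : (((Finset.Icc (u - 1) (u + 1)).filter fun v => adj u v ∧ v ∉ A).filter
      fun v => v ∈ Λ) = Λ.filter fun v => adj u v ∧ v ∉ A := by
    ext v
    simp only [Finset.mem_filter]
    constructor
    · rintro ⟨⟨_, ha, hna⟩, hv⟩; exact ⟨hv, ha, hna⟩
    · rintro ⟨hv, ha, hna⟩; exact ⟨⟨adj_mem_Icc ha, ha, hna⟩, hv⟩
  have e2 : (((Finset.Icc (u - 1) (u + 1)).filter fun v => adj u v ∧ v ∉ A).filter
      fun v => ¬v ∈ Λ) = (Finset.Icc (u - 1) (u + 1)).filter fun v => adj u v ∧ v ∉ Λ := by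
    ext v
    simp only [Finset.mem_filter]
    constructor
    · rintro ⟨⟨hI, ha, _⟩, hv⟩; exact ⟨hI, ha, hv⟩
    · rintro ⟨hI, ha, hv⟩; exact ⟨⟨hI, ha, fun hvA => hv (hAΛ hvA)⟩, hv⟩
  rw [e1, e2] at key
  unfold nbrOut
  omega

lemma Zf_pos {d : ℕ} (Λ : Finset (V d)) (η T ε : ℝ) (h : V d → ℝ) :
    0 < Zf Λ η T ε h := by
  unfold Zf
  exact Finset.sum_pos (fun σ _ => Real.exp_pos _) Finset.univ_nonempty

lemma ham_flip {d : ℕ} (Λ : Finset (V d)) (ε : ℝ) (h : V d → ℝ)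
    (σ : Λ → Bool) (A : Finset (V d)) (hAΛ : A ⊆ Λ)
    (hbd : ∀ u v : V d, u ∈ A → v ∉ A → adj u v →
      extCfg Λ σ u = false ∧ extCfg Λ σ v = true) :
    ham Λ 1 ε (flipField A h) (flipCfg A σ) = ham Λ 1 ε h σ - 2 * (bdry A : ℝ) := by
  classical
  set s := extCfg Λ σ with hs
  set s' := extCfg Λ (flipCfg A σ) with hs'def
  have hs' : ∀ v, spin (s' v) = if v ∈ A then -spin (s v) else spin (s v) := by
    intro v
    rw [hs'def, extCfg_flip hAΛ σ v]
    split_ifs with hv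
    · rw [spin_not]
    · rfl
  -- field term
  have h3 : ∑ u ∈ Λ, ε * flipField A h u * spin (s' u)
      = ∑ u ∈ Λ, ε * h u * spin (s u) := by
    refine Finset.sum_congr rfl fun u _ => ?_
    rw [hs' u]
    unfold flipField
    split_ifs with hu <;> ring
  -- boundary-condition term
  have h2 : ∑ u ∈ Λ, (nbrOut Λ u : ℝ) * spin (s' u)
      = ∑ u ∈ Λ, (nbrOut Λ u : ℝ) * spin (s u) + 2 * ∑ u ∈ A, (nbrOut Λ u : ℝ) := by
    have step : ∀ u ∈ Λ, (nbrOut Λ u : ℝ) * spin (s' u)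
        = (nbrOut Λ u : ℝ) * spin (s u) + (if u ∈ A then 2 * (nbrOut Λ u : ℝ) else 0) := by
      intro u _
      rw [hs' u]
      split_ifs with huA
      · rcases Nat.eq_zero_or_pos (nbrOut Λ u) with h0 | hpos
        · simp [h0]
        · obtain ⟨v, hv⟩ := Finset.card_pos.mp hpos
          simp only [nbrOut, Finset.mem_filter] at hv
          have hvA : v ∉ A := fun hvA => hv.2.2 (hAΛ hvA)
          have hsu : s u = false := (hbd u v huA hvA hv.2.1).1
          rw [hsu]
          simp only [spin]
          norm_num
          ring
      · ring
    rw [Finset.sum_congr rfl step, Finset.sum_add_distrib, Finset.sum_ite_mem,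
      Finset.inter_eq_right.mpr hAΛ, Finset.mul_sum]
  -- interaction term
  have h1 : ∑ u ∈ Λ, ∑ v ∈ Λ.filter (fun v => adj u v), spin (s' u) * spin (s' v)
      = ∑ u ∈ Λ, ∑ v ∈ Λ.filter (fun v => adj u v), spin (s u) * spin (s v)
        + 4 * ∑ u ∈ A, ((Λ.filter fun v => adj u v ∧ v ∉ A).card : ℝ) := by
    have pair : ∀ u ∈ Λ, ∀ v ∈ Λ.filter (fun v => adj u v),
        spin (s' u) * spin (s' v) = spin (s u) * spin (s v)
          + ((if u ∈ A ∧ v ∉ A then (2:ℝ) else 0) + (if v ∈ A ∧ u ∉ A then (2:ℝ) else 0)) := by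
      intro u hu v hv
      rw [Finset.mem_filter] at hv
      rw [hs' u, hs' v]
      by_cases huA : u ∈ A <;> by_cases hvA : v ∈ A
      · simp [huA, hvA]
      · obtain ⟨hsu, hsv⟩ := hbd u v huA hvA hv.2
        simp [huA, hvA, hsu, hsv, spin]
        norm_num
      · obtain ⟨hsv, hsu⟩ := hbd v u hvA huA (adj_symm hv.2)
        simp [huA, hvA, hsu, hsv, spin]
        norm_num
      · simp [huA, hvA]
    rw [Finset.sum_congr rfl (fun u hu => Finset.sum_congr rfl (pair u hu))]
    simp only [Finset.sum_add_distrib]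
    have inner : ∀ u ∈ Λ, ∑ v ∈ Λ.filter (fun v => adj u v), (if u ∈ A ∧ v ∉ A then (2:ℝ) else 0)
        = if u ∈ A then 2 * ((Λ.filter fun v => adj u v ∧ v ∉ A).card : ℝ) else 0 := by
      intro u _
      by_cases huA : u ∈ A
      · simp only [huA, true_and, if_true]
        rw [← Finset.sum_filter, Finset.filter_filter, Finset.sum_const, nsmul_eq_mul]
        ring
      · simp [huA]
    have d1 : ∑ u ∈ Λ, ∑ v ∈ Λ.filter (fun v => adj u v), (if u ∈ A ∧ v ∉ A then (2:ℝ) else 0)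
        = 2 * ∑ u ∈ A, ((Λ.filter fun v => adj u v ∧ v ∉ A).card : ℝ) := by
      rw [Finset.sum_congr rfl inner, Finset.sum_ite_mem,
        Finset.inter_eq_right.mpr hAΛ, Finset.mul_sum]
    have swap : ∑ u ∈ Λ, ∑ v ∈ Λ.filter (fun v => adj u v), (if v ∈ A ∧ u ∉ A then (2:ℝ) else 0)
        = ∑ u ∈ Λ, ∑ v ∈ Λ.filter (fun v => adj u v), (if u ∈ A ∧ v ∉ A then (2:ℝ) else 0) := by
      simp only [Finset.sum_filter]
      rw [Finset.sum_comm]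
      refine Finset.sum_congr rfl fun a _ => Finset.sum_congr rfl fun b _ => ?_
      by_cases hab : adj b a
      · rw [if_pos hab, if_pos (adj_symm hab)]
      · rw [if_neg hab, if_neg fun hab2 => hab (adj_symm hab2)]
    rw [swap, d1]
    ring
  -- assemble
  have hbdry : (bdry A : ℝ)
      = ∑ u ∈ A, (((Λ.filter fun v => adj u v ∧ v ∉ A).card : ℝ) + (nbrOut Λ u : ℝ)) := by
    unfold bdry
    push_cast
    refine Finset.sum_congr rfl fun u hu => ?_
    rw [bdry_split Λ A hAΛ u hu]
    push_cast
    ring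
  unfold ham
  rw [h1, h2, h3, hbdry, Finset.sum_add_distrib]
  ring

/-- **The key density identity for the Peierls map.**  If `σ_o = -1` and `A = 𝒜_σ` is the
simply connected component enclosed by the outermost boundary of the sign component of the
origin — so that `A ∈ 𝔄` and every boundary edge `(u,v) ∈ ∂A` has `σ_u = -1`, `σ_v = +1`
(with `σ ≡ +1` off `Λ_N`) — then
`ν⁺(h,σ)/ν⁺(h^A,σ^A) = e^{-(2/T)|∂A|} · Z⁺(h^A)/Z⁺(h)`. -/
theorem rfim_density_identity (d N : ℕ) (hd : 2 ≤ d) (hN : 1 ≤ N)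
    (T ε : ℝ) (hT : 0 < T) (hε : 0 ≤ ε) (h : V d → ℝ) (σ : box d N → Bool)
    (hσo : extCfg (box d N) σ 0 = false)
    (A : Finset (V d)) (hA : A ∈ goodSets d N)
    (hbd : ∀ u v : V d, u ∈ A → v ∉ A → adj u v →
      extCfg (box d N) σ u = false ∧ extCfg (box d N) σ v = true) :
    nuPlus (box d N) T ε h σ / nuPlus (box d N) T ε (flipField A h) (flipCfg A σ) =
      exp (-(2/T) * (bdry A : ℝ)) *
        (Zf (box d N) 1 T ε (flipField A h) / Zf (box d N) 1 T ε h) := by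
  classical
  have hAΛ : A ⊆ box d N := hA.1
  have hflip := ham_flip (box d N) ε h σ A hAΛ hbd
  have hG : (∏ u ∈ box d N, (1 / Real.sqrt (2 * π)) * exp (-(flipField A h u)^2 / 2))
      = ∏ u ∈ box d N, (1 / Real.sqrt (2 * π)) * exp (-(h u)^2 / 2) := by
    refine Finset.prod_congr rfl fun u _ => ?_
    unfold flipField
    split_ifs with hu
    · rw [neg_sq]
    · rfl
  have hGpos : 0 < ∏ u ∈ box d N, (1 / Real.sqrt (2 * π)) * exp (-(h u)^2 / 2) :=
    Finset.prod_pos fun u _ => mul_pos (by positivity) (exp_pos _)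
  have hZ := Zf_pos (box d N) 1 T ε h
  have hZ' := Zf_pos (box d N) 1 T ε (flipField A h)
  unfold nuPlus
  rw [hG, hflip]
  have key : exp (-(ham (box d N) 1 ε h σ) / T)
      = exp (-(2/T) * (bdry A : ℝ)) *
        exp (-(ham (box d N) 1 ε h σ - 2 * (bdry A : ℝ)) / T) := by
    rw [← Real.exp_add]
    congr 1
    field_simp
    ring
  rw [key]
  have hE := Real.exp_pos (-(ham (box d N) 1 ε h σ - 2 * (bdry A : ℝ)) / T)
  field_simp
end RFIM
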